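/- Let p be a prime and let k be a commutative ring of characteristic p. Let f ∈ k[X] be a polynomial that is additive, i.e., in the polynomial ring k[X,Y] in two variables the identity f(X+Y) = f(X) + f(Y) holds, where f(g) denotes the evaluation of f at the polynomial g. Then f lies in the k-linear span of the monomials X^{p^i} for i ∈ ℕ; that is, f = ∑_i a_i X^{p^i} for finitely many coefficients a_i ∈ k. -/
import Mathlib


open Polynomial

lemma my_key (p : ℕ) (hp : p.Prime) : ∀ n, 0 < n → ¬ p ∣ n.choose (p ^ n.factorization p) := by
  intro n
  induction n using Nat.strong_induction_on with
  | _ n ih =>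
    intro hn hdvd
    by_cases hpn : p ∣ n
    · have hv : 1 ≤ n.factorization p := by
        rw [← Nat.Prime.pow_dvd_iff_le_factorization hp hn.ne']
        simpa using hpn
      have : Fact p.Prime := ⟨hp⟩
      have H := @Choose.choose_modEq_choose_mod_mul_choose_div_nat n (p ^ n.factorization p) p this
      have hnp : n % p = 0 := Nat.mod_eq_zero_of_dvd hpn
      have hpvp : (p ^ n.factorization p) % p = 0 :=
        Nat.mod_eq_zero_of_dvd (dvd_pow_self p (by omega))
      have hpvd : (p ^ n.factorization p) / p = p ^ (n.factorization p - 1) := by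
        simpa using Nat.pow_div hv hp.pos
      have hfd : (n / p).factorization p = n.factorization p - 1 := by
        rw [Nat.factorization_div hpn]
        simp [hp.factorization]
      rw [hnp, hpvp, hpvd, Nat.choose_zero_right, one_mul, ← hfd] at H
      have hlt : n / p < n := Nat.div_lt_self hn hp.one_lt
      have hpos : 0 < n / p := Nat.div_pos (Nat.le_of_dvd hn hpn) hp.pos
      exact ih (n / p) hlt hpos ((Nat.modEq_zero_iff_dvd).mp
        (H.symm.trans ((Nat.modEq_zero_iff_dvd).mpr hdvd)))
    · have hv : n.factorization p = 0 := Nat.factorization_eq_zero_of_not_dvd hpn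
      rw [hv, pow_zero, Nat.choose_one_right] at hdvd
      exact hpn hdvd

lemma my_hasseDeriv_map {R S : Type*} [CommSemiring R] [CommSemiring S] (φ : R →+* S)
    (a : ℕ) (f : R[X]) : hasseDeriv a (f.map φ) = (hasseDeriv a f).map φ := by
  ext n
  simp [hasseDeriv_coeff, coeff_map]

/-- Over a commutative ring of characteristic `p`, every additive polynomial
(`f(X+Y) = f(X) + f(Y)` in two variables) lies in the `k`-span of the monomials
`X^{p^i}`. -/
theorem additive_polynomial_mem_span_frobenius_powers
    (p : ℕ) [Fact p.Prime] (k : Type*) [CommRing k] [CharP k p]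
    (f : Polynomial k)
    (hf : Polynomial.aeval (MvPolynomial.X 0 + MvPolynomial.X 1 : MvPolynomial (Fin 2) k) f =
      Polynomial.aeval (MvPolynomial.X 0 : MvPolynomial (Fin 2) k) f +
        Polynomial.aeval (MvPolynomial.X 1 : MvPolynomial (Fin 2) k) f) :
    f ∈ Submodule.span k (Set.range fun i : ℕ => (Polynomial.X : Polynomial k) ^ p ^ i) := by
  have hp := (Fact.out : p.Prime)
  -- constant coefficient is zero
  have hc0 : f.coeff 0 = 0 := by
    have h := congrArg (MvPolynomial.aeval (fun _ => (0 : k))) hf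
    simp only [map_add, ← Polynomial.aeval_algHom_apply, MvPolynomial.aeval_X, add_zero] at h
    have h0 : Polynomial.aeval (0 : k) f = 0 := by linear_combination -h
    rwa [Polynomial.coeff_zero_eq_aeval_zero]
  -- reformulate over k[Y][X]
  have key : ∀ q : Polynomial (Polynomial k), Polynomial.aeval q f =
      (f.map (algebraMap k (Polynomial k))).comp q := by
    intro q
    rw [Polynomial.comp_eq_aeval, Polynomial.aeval_map_algebraMap]
  have h := congrArg (MvPolynomial.aeval
    ![(Polynomial.X : Polynomial (Polynomial k)), Polynomial.C Polynomial.X]) hf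
  simp only [map_add, ← Polynomial.aeval_algHom_apply, MvPolynomial.aeval_X,
    Matrix.cons_val_zero, Matrix.cons_val_one, Matrix.head_cons] at h
  rw [key, key, key, Polynomial.comp_X, Polynomial.comp_C,
    ← Polynomial.taylor_apply] at h
  -- coefficient identities
  have h4 : ∀ a j : ℕ, 1 ≤ a → 1 ≤ j → ((j + a).choose a : k) * f.coeff (j + a) = 0 := by
    intro a j ha hj
    have h3 := congrArg (fun q => Polynomial.coeff q a) h
    simp only [Polynomial.taylor_coeff, Polynomial.coeff_add, Polynomial.coeff_C,
      if_neg (by omega : ¬ a = 0), add_zero] at h3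
    rw [my_hasseDeriv_map, Polynomial.eval_map, Polynomial.coeff_map] at h3
    have h5 : (Polynomial.hasseDeriv a f) = Polynomial.C (f.coeff a) := by
      rw [Polynomial.algebraMap_eq, Polynomial.eval₂_C_X] at h3
      exact h3
    have h6 := congrArg (fun q => Polynomial.coeff q j) h5
    simp only [Polynomial.hasseDeriv_coeff, Polynomial.coeff_C,
      if_neg (by omega : ¬ j = 0)] at h6
    exact h6
  -- every exponent in the support is a power of p
  have hsupp : ∀ n ∈ f.support, ∃ i, n = p ^ i := by
    intro n hn
    by_contra hno
    rw [Polynomial.mem_support_iff] at hn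
    have hn0 : n ≠ 0 := fun h => hn (h ▸ hc0)
    have hdvd : p ^ n.factorization p ∣ n := Nat.ordProj_dvd n p
    have hlt : p ^ n.factorization p < n :=
      lt_of_le_of_ne (Nat.le_of_dvd (Nat.pos_of_ne_zero hn0) hdvd)
        (fun hh => hno ⟨n.factorization p, hh.symm⟩)
    have h1 : 1 ≤ p ^ n.factorization p := Nat.one_le_pow _ _ hp.pos
    have h7 := h4 (p ^ n.factorization p) (n - p ^ n.factorization p) h1 (by omega)
    rw [Nat.sub_add_cancel hlt.le] at h7
    have hnd : ¬ p ∣ n.choose (p ^ n.factorization p) :=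
      my_key p hp n (Nat.pos_of_ne_zero hn0)
    have hu : IsUnit ((n.choose (p ^ n.factorization p) : k)) := by
      have hz : IsUnit ((n.choose (p ^ n.factorization p) : ZMod p)) := by
        rw [isUnit_iff_ne_zero, Ne, ZMod.natCast_eq_zero_iff]
        exact hnd
      have := hz.map (ZMod.castHom (dvd_refl p) k)
      simpa using this
    exact hn (by simpa using hu.mul_right_eq_zero.mp h7)
  -- conclude
  rw [Polynomial.as_sum_support f]
  apply Submodule.sum_mem
  intro n hn
  obtain ⟨i, rfl⟩ := hsupp n hn
  rw [← Polynomial.smul_X_eq_monomial]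
  exact Submodule.smul_mem _ _ (Submodule.subset_span ⟨i, rfl⟩)
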